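/- arXiv:2303.11901 — 6 statements merged into one kernel-verified Lean document; each statement's English description precedes it below -/
import Mathlib

section
/- Let n, k be positive integers, let Ã, M_R ∈ ℝ^{n×n} be invertible, let b̃, x₀, x̄, δr₀, δx ∈ ℝⁿ, Z̄, Ẑ, V̄ ∈ ℝ^{n×k}, Δ ∈ ℝ^{n×n}, ȳ ∈ ℝᵏ, and let u, ε₁, ε₂, ε_R ≥ 0 and c ≥ 1 be real numbers. Assume: (i) b̃ − Ãx₀ + δr₀ = Ã(Z̄ + Ẑ)ȳ; (ii) x̄ = x₀ + Z̄ȳ + δx; (iii) ‖δr₀‖ ≤ ε₂‖b̃‖ + ε₁‖Ã‖‖x₀‖; (iv) ‖ÃẐ‖ ≤ ε₁‖Ã‖‖Z̄‖; (v) ‖δx‖ ≤ u(c‖Z̄‖‖ȳ‖ + ‖x₀‖); (vi) Z̄ = M_R⁻¹V̄ + ΔV̄ with ‖Δ‖ ≤ ε_R and ‖V̄‖ ≤ c; (vii) ‖ȳ‖ ≤ 1.3‖V̄ȳ‖; (viii) ρ := 1.3·c·‖M_R‖(u‖Z̄‖ + ε_R) < 1. Then the residual of the left-preconditioned system satisfies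 ‖b̃ − Ãx̄‖ ≤ (1.3(1+c)/(1−ρ)) · ( ε₂‖b̃‖ + (ε₁+u)‖Ã‖( ‖Z̄‖‖M_R(x̄ − x₀)‖ + (1 + u‖M_R‖‖Z̄‖)‖x₀‖ ) ). -/
set_option maxHeartbeats 1000000


open scoped Matrix.Norms.L2Operator

/-- Deterministic form of Theorem 2.1: residual bound for mixed precision
split-preconditioned FGMRES. -/
theorem fgmres_residual_bound
    (n k : ℕ) (hn : 0 < n) (hk : 0 < k)
    (Atil MR : Matrix (Fin n) (Fin n) ℝ)
    (hAtil : IsUnit Atil.det) (hMR : IsUnit MR.det)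
    (btil x₀ xbar δr₀ δx : Matrix (Fin n) (Fin 1) ℝ)
    (Zbar Zhat Vbar : Matrix (Fin n) (Fin k) ℝ)
    (Δ : Matrix (Fin n) (Fin n) ℝ)
    (ybar : Matrix (Fin k) (Fin 1) ℝ)
    (u ε₁ ε₂ εR c : ℝ)
    (hu : 0 ≤ u) (hε₁ : 0 ≤ ε₁) (hε₂ : 0 ≤ ε₂) (hεR : 0 ≤ εR) (hc : 1 ≤ c)
    (h1 : btil - Atil * x₀ + δr₀ = Atil * (Zbar + Zhat) * ybar)
    (h2 : xbar = x₀ + Zbar * ybar + δx)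
    (h3 : ‖δr₀‖ ≤ ε₂ * ‖btil‖ + ε₁ * ‖Atil‖ * ‖x₀‖)
    (h4 : ‖Atil * Zhat‖ ≤ ε₁ * ‖Atil‖ * ‖Zbar‖)
    (h5 : ‖δx‖ ≤ u * (c * ‖Zbar‖ * ‖ybar‖ + ‖x₀‖))
    (h6 : Zbar = MR⁻¹ * Vbar + Δ * Vbar)
    (h6a : ‖Δ‖ ≤ εR) (h6b : ‖Vbar‖ ≤ c)
    (h7 : ‖ybar‖ ≤ 1.3 * ‖Vbar * ybar‖)
    (ρ : ℝ) (hρdef : ρ = 1.3 * c * ‖MR‖ * (u * ‖Zbar‖ + εR))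
    (hρ : ρ < 1) :
    ‖btil - Atil * xbar‖ ≤
      (1.3 * (1 + c) / (1 - ρ)) *
        (ε₂ * ‖btil‖ + (ε₁ + u) * ‖Atil‖ *
          (‖Zbar‖ * ‖MR * (xbar - x₀)‖ + (1 + u * ‖MR‖ * ‖Zbar‖) * ‖x₀‖)) := by
  -- notation for the scalar quantities
  set a := ‖Atil‖ with ha
  set z := ‖Zbar‖ with hz
  set y := ‖ybar‖ with hy
  set m := ‖MR‖ with hm
  set x0 := ‖x₀‖ with hx0
  set b := ‖btil‖ with hb
  set r := ‖MR * (xbar - x₀)‖ with hr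
  set v := ‖Vbar * ybar‖ with hv
  set dx := ‖δx‖ with hdx
  have a0 : (0:ℝ) ≤ a := norm_nonneg _
  have z0 : (0:ℝ) ≤ z := norm_nonneg _
  have y0 : (0:ℝ) ≤ y := norm_nonneg _
  have m0 : (0:ℝ) ≤ m := norm_nonneg _
  have x00 : (0:ℝ) ≤ x0 := norm_nonneg _
  have b0 : (0:ℝ) ≤ b := norm_nonneg _
  have r0 : (0:ℝ) ≤ r := norm_nonneg _
  have v0 : (0:ℝ) ≤ v := norm_nonneg _
  have c0 : (0:ℝ) ≤ c := le_trans zero_le_one hc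
  -- key algebraic identity 1
  have h1' : btil - Atil * x₀ + δr₀ = Atil * Zbar * ybar + Atil * Zhat * ybar := by
    rw [h1, Matrix.mul_add, Matrix.add_mul]
  have E1 : btil - Atil * xbar = Atil * Zhat * ybar - δr₀ - Atil * δx := by
    have h2' : Atil * xbar = Atil * x₀ + Atil * Zbar * ybar + Atil * δx := by
      rw [h2, Matrix.mul_add, Matrix.mul_add, Matrix.mul_assoc]
    have hZh : Atil * Zhat * ybar = (btil - Atil * x₀ + δr₀) - Atil * Zbar * ybar :=
      eq_sub_of_add_eq' h1'.symm
    rw [h2', hZh]; abel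
  -- key algebraic identity 2
  have hx : xbar - x₀ = Zbar * ybar + δx := by rw [h2]; abel
  have h6' : Zbar * ybar = MR⁻¹ * (Vbar * ybar) + Δ * (Vbar * ybar) := by
    rw [h6, Matrix.add_mul, Matrix.mul_assoc, Matrix.mul_assoc]
  have E2 : Vbar * ybar = MR * (xbar - x₀) - MR * δx - MR * (Δ * (Vbar * ybar)) := by
    rw [hx, Matrix.mul_add, h6', Matrix.mul_add, ← Matrix.mul_assoc,
      Matrix.mul_nonsing_inv MR hMR, Matrix.one_mul]
    abel
  -- norm bound from E2
  have hΔV : ‖Δ * (Vbar * ybar)‖ ≤ εR * (c * y) := by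
    calc ‖Δ * (Vbar * ybar)‖ ≤ ‖Δ‖ * ‖Vbar * ybar‖ := Matrix.l2_opNorm_mul _ _
      _ ≤ ‖Δ‖ * (‖Vbar‖ * ‖ybar‖) := by
          have := Matrix.l2_opNorm_mul Vbar ybar
          exact mul_le_mul_of_nonneg_left this (norm_nonneg _)
      _ ≤ εR * (c * y) := by
          apply mul_le_mul h6a _ (by positivity) hεR
          exact mul_le_mul_of_nonneg_right h6b y0
  have I2 : v ≤ r + m * dx + m * (εR * (c * y)) := by
    calc v = ‖MR * (xbar - x₀) - MR * δx - MR * (Δ * (Vbar * ybar))‖ := by rw [hv, ← E2]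
      _ ≤ ‖MR * (xbar - x₀) - MR * δx‖ + ‖MR * (Δ * (Vbar * ybar))‖ := norm_sub_le _ _
      _ ≤ ‖MR * (xbar - x₀)‖ + ‖MR * δx‖ + ‖MR * (Δ * (Vbar * ybar))‖ := by
          have := norm_sub_le (MR * (xbar - x₀)) (MR * δx)
          linarith
      _ ≤ r + m * dx + m * (εR * (c * y)) := by
          have hmd : ‖MR * δx‖ ≤ m * dx := Matrix.l2_opNorm_mul _ _
          have hmv : ‖MR * (Δ * (Vbar * ybar))‖ ≤ m * (εR * (c * y)) := by
            calc ‖MR * (Δ * (Vbar * ybar))‖ ≤ m * ‖Δ * (Vbar * ybar)‖ :=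
                  Matrix.l2_opNorm_mul _ _
              _ ≤ m * (εR * (c * y)) := mul_le_mul_of_nonneg_left hΔV m0
          linarith
  -- bound on y
  have hy1 : (1 - ρ) * y ≤ 1.3 * (r + u * m * x0) := by
    have h13 : (0:ℝ) ≤ 1.3 := by norm_num
    have hI2' : 1.3 * v ≤ 1.3 * (r + m * dx + m * (εR * (c * y))) :=
      mul_le_mul_of_nonneg_left I2 h13
    have hmdx : m * dx ≤ m * (u * (c * z * y + x0)) := mul_le_mul_of_nonneg_left h5 m0
    rw [hρdef]
    nlinarith [h7, hI2', hmdx]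
  -- main residual bound
  have hadx : ‖Atil * δx‖ ≤ a * (u * (c * z * y + x0)) := by
    calc ‖Atil * δx‖ ≤ a * dx := Matrix.l2_opNorm_mul _ _
      _ ≤ a * (u * (c * z * y + x0)) := mul_le_mul_of_nonneg_left h5 a0
  have hAZy : ‖Atil * Zhat * ybar‖ ≤ ε₁ * a * z * y := by
    calc ‖Atil * Zhat * ybar‖ ≤ ‖Atil * Zhat‖ * y := Matrix.l2_opNorm_mul _ _
      _ ≤ ε₁ * a * z * y := mul_le_mul_of_nonneg_right h4 y0
  have hL : ‖btil - Atil * xbar‖ ≤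
      ε₂ * b + (ε₁ + u) * a * x0 + c * (ε₁ + u) * a * z * y := by
    have hN : ‖btil - Atil * xbar‖ ≤ ‖Atil * Zhat * ybar‖ + ‖δr₀‖ + ‖Atil * δx‖ := by
      rw [E1]
      have := norm_sub_le (Atil * Zhat * ybar - δr₀) (Atil * δx)
      have := norm_sub_le (Atil * Zhat * ybar) δr₀
      linarith
    nlinarith [mul_nonneg (mul_nonneg a0 z0) y0, mul_nonneg (mul_nonneg hu a0) x00,
      mul_nonneg (mul_nonneg (mul_nonneg hε₁ a0) z0) y0]
  -- finishing: pass to the division form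
  have hD : (0:ℝ) < 1 - ρ := by linarith
  have hρ0 : (0:ℝ) ≤ ρ := by rw [hρdef]; positivity
  rw [div_mul_eq_mul_div, le_div_iff₀ hD]
  have step : ‖btil - Atil * xbar‖ * (1 - ρ) ≤
      (ε₂ * b + (ε₁ + u) * a * x0 + c * (ε₁ + u) * a * z * y) * (1 - ρ) :=
    mul_le_mul_of_nonneg_right hL (le_of_lt hD)
  have key : c * (ε₁ + u) * a * z * ((1 - ρ) * y) ≤
      c * (ε₁ + u) * a * z * (1.3 * (r + u * m * x0)) :=
    mul_le_mul_of_nonneg_left hy1 (by positivity)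
  nlinarith [step, key,
    mul_nonneg hρ0 (mul_nonneg hε₂ b0),
    mul_nonneg hρ0 (mul_nonneg (mul_nonneg (add_nonneg hε₁ hu) a0) x00),
    mul_nonneg (mul_nonneg hε₂ b0) c0,
    mul_nonneg (mul_nonneg (mul_nonneg (add_nonneg hε₁ hu) a0) x00) c0,
    mul_nonneg (mul_nonneg (mul_nonneg (add_nonneg hε₁ hu) a0) z0) r0,
    mul_nonneg (mul_nonneg (mul_nonneg (mul_nonneg (mul_nonneg (add_nonneg hε₁ hu) a0) hu) m0) z0) x00]
end

section
/- Under the same hypotheses (i)–(viii) as in the deterministic Theorem 2.1 (with Ã, M_R ∈ ℝ^{n×n} invertible; b̃, x₀, x̄, δr₀, δx ∈ ℝⁿ; Z̄, Ẑ, V̄ ∈ ℝ^{n×k}; Δ ∈ ℝ^{n×n}; ȳ ∈ ℝᵏ; u, ε₁, ε₂, ε_R ≥ 0, c ≥ 1; ρ := 1.3c‖M_R‖(u‖Z̄‖ + ε_R) < 1), and assuming additionally that ‖b̃‖ + ‖Ã‖‖x̄‖ > 0, the normwise relative backward error of the left-preconditioned system satisfies ‖b̃ − Ãx̄‖ / (‖b̃‖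 + ‖Ã‖‖x̄‖) ≤ (1.3(1+c)/(1−ρ)) · ζ, where ζ := ( ε₂‖b̃‖ + (ε₁+u)‖Ã‖( ‖Z̄‖‖M_R(x̄ − x₀)‖ + (1 + u‖M_R‖‖Z̄‖)‖x₀‖ ) ) / (‖b̃‖ + ‖Ã‖‖x̄‖). -/
open scoped Matrix.Norms.L2Operator

set_option maxHeartbeats 1600000 in
/-- Deterministic form of Theorem 2.1: normwise relative backward error bound for
mixed precision split-preconditioned FGMRES on the left-preconditioned system. -/
theorem fgmres_backward_error_bound
    (n k : ℕ) (hn : 0 < n) (hk : 0 < k)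
    (Atil MR : Matrix (Fin n) (Fin n) ℝ)
    (hAtil : IsUnit Atil.det) (hMR : IsUnit MR.det)
    (btil x₀ xbar δr₀ δx : Matrix (Fin n) (Fin 1) ℝ)
    (Zbar Zhat Vbar : Matrix (Fin n) (Fin k) ℝ)
    (Δ : Matrix (Fin n) (Fin n) ℝ)
    (ybar : Matrix (Fin k) (Fin 1) ℝ)
    (u ε₁ ε₂ εR c : ℝ)
    (hu : 0 ≤ u) (hε₁ : 0 ≤ ε₁) (hε₂ : 0 ≤ ε₂) (hεR : 0 ≤ εR) (hc : 1 ≤ c)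
    (h1 : btil - Atil * x₀ + δr₀ = Atil * (Zbar + Zhat) * ybar)
    (h2 : xbar = x₀ + Zbar * ybar + δx)
    (h3 : ‖δr₀‖ ≤ ε₂ * ‖btil‖ + ε₁ * ‖Atil‖ * ‖x₀‖)
    (h4 : ‖Atil * Zhat‖ ≤ ε₁ * ‖Atil‖ * ‖Zbar‖)
    (h5 : ‖δx‖ ≤ u * (c * ‖Zbar‖ * ‖ybar‖ + ‖x₀‖))
    (h6 : Zbar = MR⁻¹ * Vbar + Δ * Vbar)
    (h6a : ‖Δ‖ ≤ εR) (h6b : ‖Vbar‖ ≤ c)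
    (h7 : ‖ybar‖ ≤ 1.3 * ‖Vbar * ybar‖)
    (ρ : ℝ) (hρdef : ρ = 1.3 * c * ‖MR‖ * (u * ‖Zbar‖ + εR))
    (hρ : ρ < 1)
    (hpos : 0 < ‖btil‖ + ‖Atil‖ * ‖xbar‖) :
    ‖btil - Atil * xbar‖ / (‖btil‖ + ‖Atil‖ * ‖xbar‖) ≤
      (1.3 * (1 + c) / (1 - ρ)) *
        ((ε₂ * ‖btil‖ + (ε₁ + u) * ‖Atil‖ *
            (‖Zbar‖ * ‖MR * (xbar - x₀)‖ + (1 + u * ‖MR‖ * ‖Zbar‖) * ‖x₀‖)) /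
          (‖btil‖ + ‖Atil‖ * ‖xbar‖)) := by
  -- notation
  set a := ‖Atil‖ with ha
  set b := ‖btil‖ with hb
  set z := ‖Zbar‖ with hz
  set m := ‖MR‖ with hm
  set y := ‖ybar‖ with hy
  set x0 := ‖x₀‖ with hx0
  set w := ‖MR * (xbar - x₀)‖ with hw
  have ha0 : 0 ≤ a := norm_nonneg _
  have hb0 : 0 ≤ b := norm_nonneg _
  have hz0 : 0 ≤ z := norm_nonneg _
  have hm0 : 0 ≤ m := norm_nonneg _
  have hy0 : 0 ≤ y := norm_nonneg _
  have hx00 : 0 ≤ x0 := norm_nonneg _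
  have hw0 : 0 ≤ w := norm_nonneg _
  have hΔ0 : (0:ℝ) ≤ εR := hεR
  have h1ρ : 0 < 1 - ρ := by linarith
  have hρ0 : 0 ≤ ρ := by
    rw [hρdef]
    have : (0:ℝ) ≤ u * z + εR := by positivity
    have : (0:ℝ) ≤ 1.3 * c * m := by nlinarith
    nlinarith
  -- residual identity
  have hres : btil - Atil * xbar = Atil * Zhat * ybar - δr₀ - Atil * δx := by
    have e1 : Atil * (Zbar + Zhat) * ybar
        = Atil * (Zbar * ybar) + Atil * Zhat * ybar := by
      rw [Matrix.mul_add, Matrix.add_mul, Matrix.mul_assoc]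
    have h1' : btil - Atil * x₀ + δr₀
        = Atil * (Zbar * ybar) + Atil * Zhat * ybar := by rw [h1, e1]
    rw [h2, Matrix.mul_add, Matrix.mul_add]
    have : btil - (Atil * x₀ + Atil * (Zbar * ybar) + Atil * δx)
        = (btil - Atil * x₀ + δr₀) - Atil * (Zbar * ybar) - δr₀ - Atil * δx := by
      abel
    rw [this, h1']
    abel
  -- Step A : bound on residual norm
  have hAZh : ‖Atil * Zhat * ybar‖ ≤ ε₁ * a * z * y := by
    calc ‖Atil * Zhat * ybar‖ ≤ ‖Atil * Zhat‖ * ‖ybar‖ := Matrix.l2_opNorm_mul _ _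
      _ ≤ (ε₁ * a * z) * y := by
          apply mul_le_mul_of_nonneg_right h4 hy0
  have hAdx : ‖Atil * δx‖ ≤ a * (u * (c * z * y + x0)) := by
    calc ‖Atil * δx‖ ≤ ‖Atil‖ * ‖δx‖ := Matrix.l2_opNorm_mul _ _
      _ ≤ a * (u * (c * z * y + x0)) := by
          apply mul_le_mul_of_nonneg_left h5 ha0
  have hN : ‖btil - Atil * xbar‖ ≤ ε₂ * b + (ε₁ + u) * a * (c * z * y + x0) := by
    rw [hres]
    have t1 : ‖Atil * Zhat * ybar - δr₀ - Atil * δx‖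
        ≤ ‖Atil * Zhat * ybar‖ + ‖δr₀‖ + ‖Atil * δx‖ := by
      calc ‖Atil * Zhat * ybar - δr₀ - Atil * δx‖
          ≤ ‖Atil * Zhat * ybar - δr₀‖ + ‖Atil * δx‖ := norm_sub_le _ _
        _ ≤ ‖Atil * Zhat * ybar‖ + ‖δr₀‖ + ‖Atil * δx‖ := by
            have := norm_sub_le (Atil * Zhat * ybar) δr₀
            linarith
    have hzy : 0 ≤ z * y := mul_nonneg hz0 hy0
    nlinarith [mul_nonneg ha0 (mul_nonneg hε₁ hzy), mul_nonneg hε₁ (mul_nonneg ha0 hzy),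
      mul_nonneg (mul_nonneg hε₁ ha0) (mul_nonneg hzy (by linarith : (0:ℝ) ≤ c - 1))]
  -- Step B : bound on ‖ybar‖
  have hVy : Vbar * ybar = MR * (xbar - x₀) - MR * δx - MR * Δ * (Vbar * ybar) := by
    have hMRinv : MR * MR⁻¹ = 1 := Matrix.mul_nonsing_inv MR hMR
    have hV : Vbar = MR * Zbar - MR * Δ * Vbar := by
      rw [h6, Matrix.mul_add, ← Matrix.mul_assoc, hMRinv, Matrix.one_mul,
        Matrix.mul_assoc MR Δ Vbar]
      abel
    have hZy : Zbar * ybar = (xbar - x₀) - δx := by rw [h2]; abel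
    calc Vbar * ybar = (MR * Zbar - MR * Δ * Vbar) * ybar := by rw [← hV]
      _ = MR * (Zbar * ybar) - MR * Δ * (Vbar * ybar) := by
          rw [Matrix.sub_mul, Matrix.mul_assoc, Matrix.mul_assoc]
      _ = MR * ((xbar - x₀) - δx) - MR * Δ * (Vbar * ybar) := by rw [hZy]
      _ = MR * (xbar - x₀) - MR * δx - MR * Δ * (Vbar * ybar) := by
          rw [Matrix.mul_sub]
  have hyb : (1 - ρ) * y ≤ 1.3 * (w + u * m * x0) := by
    have hv1 : ‖Vbar * ybar‖ ≤ c * y :=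
      le_trans (Matrix.l2_opNorm_mul _ _) (mul_le_mul_of_nonneg_right h6b hy0)
    have hMdx : ‖MR * δx‖ ≤ m * (u * (c * z * y + x0)) := by
      have t := Matrix.l2_opNorm_mul MR δx
      have t2 := mul_le_mul_of_nonneg_left h5 hm0
      exact le_trans t t2
    have hMΔ : ‖MR * Δ * (Vbar * ybar)‖ ≤ m * εR * (c * y) := by
      calc ‖MR * Δ * (Vbar * ybar)‖ ≤ ‖MR * Δ‖ * ‖Vbar * ybar‖ :=
            Matrix.l2_opNorm_mul (MR * Δ) (Vbar * ybar)
        _ ≤ (m * εR) * (c * y) := by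
            apply mul_le_mul _ hv1 (norm_nonneg _) (mul_nonneg hm0 hεR)
            exact le_trans (Matrix.l2_opNorm_mul _ _)
              (mul_le_mul_of_nonneg_left h6a hm0)
    have hvnorm : ‖Vbar * ybar‖ ≤ w + m * (u * (c * z * y + x0)) + m * εR * (c * y) := by
      rw [hVy]
      have t1 := norm_sub_le (MR * (xbar - x₀) - MR * δx) (MR * Δ * (Vbar * ybar))
      have t2 := norm_sub_le (MR * (xbar - x₀)) (MR * δx)
      have : ‖MR * (xbar - x₀) - MR * δx - MR * Δ * (Vbar * ybar)‖
          ≤ w + ‖MR * δx‖ + ‖MR * Δ * (Vbar * ybar)‖ := by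
        simp only [hw] at *; linarith
      linarith
    have : y ≤ 1.3 * (w + m * (u * (c * z * y + x0)) + m * εR * (c * y)) :=
      le_trans h7 (by apply mul_le_mul_of_nonneg_left hvnorm (by norm_num))
    rw [hρdef]
    nlinarith
  -- Step C : combine
  rw [mul_div_assoc', div_le_div_iff₀ hpos hpos]
  have hK1 : (1:ℝ) ≤ 1.3 * (1 + c) / (1 - ρ) := by
    rw [le_div_iff₀ h1ρ]
    linarith
  -- main numerator inequality, multiplied through by (1-ρ)
  have key : (1 - ρ) * ‖btil - Atil * xbar‖
      ≤ 1.3 * (1 + c) *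
        (ε₂ * b + (ε₁ + u) * a * (z * w + (1 + u * m * z) * x0)) := by
    have step : (1 - ρ) * (c * z * y + x0)
        ≤ 1.3 * (1 + c) * (z * w + (1 + u * m * z) * x0) := by
      have hcz : 0 ≤ c * z := mul_nonneg (by linarith) hz0
      have h1 : c * z * ((1 - ρ) * y) ≤ c * z * (1.3 * (w + u * m * x0)) :=
        mul_le_mul_of_nonneg_left hyb hcz
      nlinarith [mul_nonneg hz0 hw0, mul_nonneg (mul_nonneg hm0 hz0) hx00,
        mul_nonneg hu (mul_nonneg (mul_nonneg hm0 hz0) hx00),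
        mul_nonneg hcz hw0, hρdef, mul_nonneg (mul_nonneg (by linarith : (0:ℝ) ≤ c) hz0) hw0]
    have h1' : (1 - ρ) * ‖btil - Atil * xbar‖
        ≤ (1 - ρ) * (ε₂ * b + (ε₁ + u) * a * (c * z * y + x0)) :=
      mul_le_mul_of_nonneg_left hN h1ρ.le
    have hea : 0 ≤ (ε₁ + u) * a := mul_nonneg (by linarith) ha0
    have h2' : (ε₁ + u) * a * ((1 - ρ) * (c * z * y + x0))
        ≤ (ε₁ + u) * a * (1.3 * (1 + c) * (z * w + (1 + u * m * z) * x0)) :=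
      mul_le_mul_of_nonneg_left step hea
    have hcoef : (0:ℝ) ≤ 1.3 * (1 + c) - (1 - ρ) := by linarith
    nlinarith [mul_nonneg hcoef (mul_nonneg hε₂ hb0)]
  calc ‖btil - Atil * xbar‖ * (b + a * ‖xbar‖)
      ≤ (1.3 * (1 + c) / (1 - ρ) *
          (ε₂ * b + (ε₁ + u) * a * (z * w + (1 + u * m * z) * x0))) *
        (b + a * ‖xbar‖) := by
        apply mul_le_mul_of_nonneg_right _ hpos.le
        rw [div_mul_eq_mul_div, le_div_iff₀ h1ρ]
        nlinarith
      _ = _ := by ring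
end

section
/- Let M_R ∈ ℝ^{n×n} be invertible, let V̄, Z̄ ∈ ℝ^{n×k}, Δ ∈ ℝ^{n×n}, ȳ ∈ ℝᵏ, x₀, x̄, δx ∈ ℝⁿ, and let u, ε_R ≥ 0 and c ≥ 1 be reals. Assume: x̄ = x₀ + Z̄ȳ + δx; ‖δx‖ ≤ u(c‖Z̄‖‖ȳ‖ + ‖x₀‖); Z̄ = M_R⁻¹V̄ + ΔV̄ with ‖Δ‖ ≤ ε_R and ‖V̄‖ ≤ c; ‖ȳ‖ ≤ 1.3‖V̄ȳ‖; and ρ := 1.3·c·‖M_R‖(u‖Z̄‖ + ε_R) < 1. Then ‖ȳ‖ ≤ (1.3/(1−ρ)) · ( ‖M_R(x̄ − x₀)‖ + u‖M_R‖‖x₀‖ ). -/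
set_option maxHeartbeats 1000000

open scoped Matrix.Norms.L2Operator

/-- Stage 4 bound on the norm of the computed least-squares solution in the proof of
Theorem 2.1. -/
theorem fgmres_stage4_ybar_bound
    (n k : ℕ)
    (MR : Matrix (Fin n) (Fin n) ℝ) (hMR : IsUnit MR.det)
    (Vbar Zbar : Matrix (Fin n) (Fin k) ℝ)
    (Δ : Matrix (Fin n) (Fin n) ℝ)
    (ybar : Matrix (Fin k) (Fin 1) ℝ)
    (x₀ xbar δx : Matrix (Fin n) (Fin 1) ℝ)
    (u εR c : ℝ)
    (hu : 0 ≤ u) (hεR : 0 ≤ εR) (hc : 1 ≤ c)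
    (h2 : xbar = x₀ + Zbar * ybar + δx)
    (h5 : ‖δx‖ ≤ u * (c * ‖Zbar‖ * ‖ybar‖ + ‖x₀‖))
    (h6 : Zbar = MR⁻¹ * Vbar + Δ * Vbar)
    (h6a : ‖Δ‖ ≤ εR) (h6b : ‖Vbar‖ ≤ c)
    (h7 : ‖ybar‖ ≤ 1.3 * ‖Vbar * ybar‖)
    (ρ : ℝ) (hρdef : ρ = 1.3 * c * ‖MR‖ * (u * ‖Zbar‖ + εR))
    (hρ : ρ < 1) :
    ‖ybar‖ ≤ (1.3 / (1 - ρ)) * (‖MR * (xbar - x₀)‖ + u * ‖MR‖ * ‖x₀‖) := by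
  have hinv : MR * MR⁻¹ = 1 := Matrix.mul_nonsing_inv MR hMR
  have hmz : MR * Zbar = Vbar + MR * (Δ * Vbar) := by
    rw [h6, Matrix.mul_add, ← Matrix.mul_assoc, hinv, Matrix.one_mul]
  have hz : Zbar * ybar = xbar - x₀ - δx := by rw [h2]; abel
  have key : Vbar * ybar = MR * (xbar - x₀) - MR * δx - MR * (Δ * (Vbar * ybar)) := by
    have h0 : (MR * Zbar) * ybar = (Vbar + MR * (Δ * Vbar)) * ybar := by rw [hmz]
    rw [Matrix.mul_assoc, hz, Matrix.add_mul, Matrix.mul_assoc, Matrix.mul_assoc] at h0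
    have h1 : MR * (xbar - x₀ - δx) = MR * (xbar - x₀) - MR * δx := by
      rw [Matrix.mul_sub]
    rw [h1] at h0
    exact eq_sub_of_add_eq h0.symm
  have hMRn : (0:ℝ) ≤ ‖MR‖ := norm_nonneg _
  have hyn : (0:ℝ) ≤ ‖ybar‖ := norm_nonneg _
  have t1 : ‖Vbar * ybar‖ ≤ ‖MR * (xbar - x₀) - MR * δx‖ + ‖MR * (Δ * (Vbar * ybar))‖ := by
    have h := norm_sub_le (MR * (xbar - x₀) - MR * δx) (MR * (Δ * (Vbar * ybar)))
    rw [← key] at h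
    exact h
  have t2 : ‖MR * (xbar - x₀) - MR * δx‖ ≤ ‖MR * (xbar - x₀)‖ + ‖MR * δx‖ :=
    norm_sub_le _ _
  have t3 : ‖MR * δx‖ ≤ ‖MR‖ * ‖δx‖ := Matrix.l2_opNorm_mul _ _
  have t4 : ‖MR * (Δ * (Vbar * ybar))‖ ≤ ‖MR‖ * ‖Δ * (Vbar * ybar)‖ :=
    Matrix.l2_opNorm_mul _ _
  have t5 : ‖Δ * (Vbar * ybar)‖ ≤ ‖Δ‖ * ‖Vbar * ybar‖ := Matrix.l2_opNorm_mul _ _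
  have t6 : ‖Vbar * ybar‖ ≤ ‖Vbar‖ * ‖ybar‖ := Matrix.l2_opNorm_mul _ _
  have e0 : ‖Vbar * ybar‖ ≤ c * ‖ybar‖ :=
    t6.trans (mul_le_mul_of_nonneg_right h6b hyn)
  have e1 : ‖Δ * (Vbar * ybar)‖ ≤ εR * (c * ‖ybar‖) :=
    t5.trans (mul_le_mul h6a e0 (norm_nonneg _) hεR)
  have e2 : ‖MR * (Δ * (Vbar * ybar))‖ ≤ ‖MR‖ * (εR * (c * ‖ybar‖)) :=
    t4.trans (mul_le_mul_of_nonneg_left e1 hMRn)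
  have e3 : ‖MR * δx‖ ≤ ‖MR‖ * (u * (c * ‖Zbar‖ * ‖ybar‖ + ‖x₀‖)) :=
    t3.trans (mul_le_mul_of_nonneg_left h5 hMRn)
  have hS : ‖Vbar * ybar‖ ≤ ‖MR * (xbar - x₀)‖
      + ‖MR‖ * (u * (c * ‖Zbar‖ * ‖ybar‖ + ‖x₀‖)) + ‖MR‖ * (εR * (c * ‖ybar‖)) := by
    linarith
  have hfin : ‖ybar‖ ≤ 1.3 * (‖MR * (xbar - x₀)‖
      + ‖MR‖ * (u * (c * ‖Zbar‖ * ‖ybar‖ + ‖x₀‖)) + ‖MR‖ * (εR * (c * ‖ybar‖))) :=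
    h7.trans (mul_le_mul_of_nonneg_left hS (by norm_num))
  have hρpos : 0 < 1 - ρ := by linarith
  rw [div_mul_eq_mul_div, le_div_iff₀ hρpos]
  subst hρdef
  nlinarith [hfin]
end

section
/- Let A, M ∈ ℝ^{n×n} with M invertible, and let b, x̄ ∈ ℝⁿ. If ‖b‖ + ‖A‖‖x̄‖ > 0 and ‖M⁻¹b‖ + ‖M⁻¹A‖‖x̄‖ > 0, then ‖b − Ax̄‖ / (‖b‖ + ‖A‖‖x̄‖) ≤ κ(M) · ‖M⁻¹b − M⁻¹Ax̄‖ / (‖M⁻¹b‖ + ‖M⁻¹A‖‖x̄‖), where κ(M) = ‖M‖‖M⁻¹‖. -/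
open scoped Matrix.Norms.L2Operator

/-- The κ(M_L) branch of Corollary 2.2: the normwise relative backward error for the
original system is bounded by κ(M) times the backward error for the
left-preconditioned system. -/
theorem backward_error_original_le_condM_mul_backward_error_preconditioned
    (n : ℕ)
    (A M : Matrix (Fin n) (Fin n) ℝ) (hM : IsUnit M.det)
    (b xbar : Matrix (Fin n) (Fin 1) ℝ)
    (hpos : 0 < ‖b‖ + ‖A‖ * ‖xbar‖)
    (hpos' : 0 < ‖M⁻¹ * b‖ + ‖M⁻¹ * A‖ * ‖xbar‖) :
    ‖b - A * xbar‖ / (‖b‖ + ‖A‖ * ‖xbar‖) ≤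
      (‖M‖ * ‖M⁻¹‖) *
        (‖M⁻¹ * b - M⁻¹ * A * xbar‖ / (‖M⁻¹ * b‖ + ‖M⁻¹ * A‖ * ‖xbar‖)) := by
  set S := ‖b‖ + ‖A‖ * ‖xbar‖ with hS
  set s := ‖M⁻¹ * b‖ + ‖M⁻¹ * A‖ * ‖xbar‖ with hs
  set t := ‖M⁻¹ * b - M⁻¹ * A * xbar‖ with ht
  have hkey : b - A * xbar = M * (M⁻¹ * b - M⁻¹ * A * xbar) := by
    simp [Matrix.mul_sub, ← Matrix.mul_assoc, Matrix.mul_nonsing_inv _ hM]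
  have h1 : ‖b - A * xbar‖ ≤ ‖M‖ * t := by
    rw [hkey]; exact Matrix.l2_opNorm_mul M _
  have h2 : s ≤ ‖M⁻¹‖ * S := by
    have hb : ‖M⁻¹ * b‖ ≤ ‖M⁻¹‖ * ‖b‖ := Matrix.l2_opNorm_mul _ _
    have hA : ‖M⁻¹ * A‖ ≤ ‖M⁻¹‖ * ‖A‖ := Matrix.l2_opNorm_mul _ _
    have := mul_le_mul_of_nonneg_right hA (norm_nonneg xbar)
    simp only [hS, hs]
    nlinarith [norm_nonneg xbar]
  have ht0 : 0 ≤ t := norm_nonneg _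
  have hM0 : 0 ≤ ‖M‖ := norm_nonneg _
  calc ‖b - A * xbar‖ / S ≤ (‖M‖ * t) / S := by
        gcongr
      _ ≤ (‖M‖ * t) * (‖M⁻¹‖ / s) := by
        rw [div_eq_mul_inv]
        apply mul_le_mul_of_nonneg_left _ (mul_nonneg hM0 ht0)
        rw [le_div_iff₀ hpos']
        rw [inv_mul_le_iff₀ hpos]
        linarith
      _ = (‖M‖ * ‖M⁻¹‖) * (t / s) := by ring
end

section
/- Let M_L, Ã ∈ ℝ^{n×n} with M_L and Ã invertible, set A := M_L Ã, and let x, x̄, b̃ ∈ ℝⁿ with Ãx = b̃, x ≠ 0, and set b := M_L b̃. If t := κ(Ã)·‖b̃ − Ãx̄‖ / (‖Ã‖‖x‖) satisfies t < 1, then the normwise relative backward error of x̄ for the original system satisfies ‖b − Ax̄‖ / (‖b‖ + ‖A‖‖x̄‖) ≤ t / (1 − t), where κ(Ã) = ‖Ã‖‖Ã⁻¹‖. -/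
open scoped Matrix.Norms.L2Operator

/-- The κ(Ã) branch of Corollary 2.2: a small condition-number–times–scaled-residual
quantity for the left-preconditioned system bounds the backward error of the original
system. -/
theorem backward_error_original_le_of_cond_scaled_residual
    (n : ℕ)
    (ML Atil : Matrix (Fin n) (Fin n) ℝ)
    (hML : IsUnit ML.det) (hAtil : IsUnit Atil.det)
    (A : Matrix (Fin n) (Fin n) ℝ) (hA : A = ML * Atil)
    (x xbar btil : Matrix (Fin n) (Fin 1) ℝ)
    (hxb : Atil * x = btil) (hx : x ≠ 0)
    (b : Matrix (Fin n) (Fin 1) ℝ) (hb : b = ML * btil)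
    (t : ℝ) (ht : t = (‖Atil‖ * ‖Atil⁻¹‖) * (‖btil - Atil * xbar‖ / (‖Atil‖ * ‖x‖)))
    (ht1 : t < 1) :
    ‖b - A * xbar‖ / (‖b‖ + ‖A‖ * ‖xbar‖) ≤ t / (1 - t) := by
  have hxpos : (0:ℝ) < ‖x‖ := norm_pos_iff.mpr hx
  have hAdet : IsUnit A.det := by rw [hA, Matrix.det_mul]; exact hML.mul hAtil
  -- 1 ≤ ‖Atil⁻¹‖ * ‖Atil‖, hence both norms positive
  have hcancel : Atil⁻¹ * (Atil * x) = x := Matrix.nonsing_inv_mul_cancel_left _ _ hAtil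
  have h1 : ‖x‖ ≤ ‖Atil⁻¹‖ * (‖Atil‖ * ‖x‖) := by
    calc ‖x‖ = ‖Atil⁻¹ * (Atil * x)‖ := by rw [hcancel]
    _ ≤ ‖Atil⁻¹‖ * ‖Atil * x‖ := Matrix.l2_opNorm_mul _ _
    _ ≤ ‖Atil⁻¹‖ * (‖Atil‖ * ‖x‖) := by
        exact mul_le_mul_of_nonneg_left (Matrix.l2_opNorm_mul _ _) (norm_nonneg _)
  have hAtilpos : (0:ℝ) < ‖Atil‖ := by
    rcases (norm_nonneg Atil).lt_or_eq with h | h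
    · exact h
    · exfalso; rw [← h] at h1; nlinarith
  have hAinvpos : (0:ℝ) < ‖Atil⁻¹‖ := by
    rcases (norm_nonneg Atil⁻¹).lt_or_eq with h | h
    · exact h
    · exfalso; rw [← h] at h1; nlinarith
  -- ‖A‖ positive
  have hcancelA : A⁻¹ * (A * x) = x := Matrix.nonsing_inv_mul_cancel_left _ _ hAdet
  have h2 : ‖x‖ ≤ ‖A⁻¹‖ * (‖A‖ * ‖x‖) := by
    calc ‖x‖ = ‖A⁻¹ * (A * x)‖ := by rw [hcancelA]
    _ ≤ ‖A⁻¹‖ * ‖A * x‖ := Matrix.l2_opNorm_mul _ _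
    _ ≤ ‖A⁻¹‖ * (‖A‖ * ‖x‖) := by
        exact mul_le_mul_of_nonneg_left (Matrix.l2_opNorm_mul _ _) (norm_nonneg _)
  have hApos : (0:ℝ) < ‖A‖ := by
    rcases (norm_nonneg A).lt_or_eq with h | h
    · exact h
    · exfalso; rw [← h] at h2; nlinarith
  have htnn : 0 ≤ t := by rw [ht]; positivity
  -- forward error bound
  have hinv : x - xbar = Atil⁻¹ * (btil - Atil * xbar) := by
    rw [Matrix.mul_sub, Matrix.nonsing_inv_mul_cancel_left _ _ hAtil, ← hxb, hcancel]
  have hfe : ‖x - xbar‖ ≤ t * ‖x‖ := by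
    have htx : t * ‖x‖ = ‖Atil⁻¹‖ * ‖btil - Atil * xbar‖ := by
      rw [ht]; field_simp
    calc ‖x - xbar‖ = ‖Atil⁻¹ * (btil - Atil * xbar)‖ := by rw [hinv]
    _ ≤ ‖Atil⁻¹‖ * ‖btil - Atil * xbar‖ := Matrix.l2_opNorm_mul _ _
    _ = t * ‖x‖ := htx.symm
  -- numerator bound
  have hbA : b - A * xbar = A * (x - xbar) := by
    rw [hb, ← hxb, hA, Matrix.mul_sub, Matrix.mul_assoc, Matrix.mul_assoc]
  have hnum : ‖b - A * xbar‖ ≤ ‖A‖ * (t * ‖x‖) := by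
    calc ‖b - A * xbar‖ = ‖A * (x - xbar)‖ := by rw [hbA]
    _ ≤ ‖A‖ * ‖x - xbar‖ := Matrix.l2_opNorm_mul _ _
    _ ≤ ‖A‖ * (t * ‖x‖) := mul_le_mul_of_nonneg_left hfe (norm_nonneg _)
  -- denominator bound
  have hxbar : ‖x‖ - t * ‖x‖ ≤ ‖xbar‖ := by
    have := norm_sub_norm_le x xbar
    linarith
  have hden : ‖A‖ * ((1 - t) * ‖x‖) ≤ ‖b‖ + ‖A‖ * ‖xbar‖ := by
    have hb0 : 0 ≤ ‖b‖ := norm_nonneg _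
    nlinarith
  have hdenpos : (0:ℝ) < ‖A‖ * ((1 - t) * ‖x‖) := by
    have h1t : (0:ℝ) < 1 - t := by linarith
    exact mul_pos hApos (mul_pos h1t hxpos)
  have hnn : (0:ℝ) ≤ ‖A‖ * (t * ‖x‖) :=
    mul_nonneg (norm_nonneg _) (mul_nonneg htnn (norm_nonneg _))
  have key : ‖b - A * xbar‖ / (‖b‖ + ‖A‖ * ‖xbar‖)
      ≤ (‖A‖ * (t * ‖x‖)) / (‖A‖ * ((1 - t) * ‖x‖)) :=
    div_le_div₀ hnn hnum hdenpos hden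
  have heq : (‖A‖ * (t * ‖x‖)) / (‖A‖ * ((1 - t) * ‖x‖)) = t / (1 - t) := by
    rw [mul_div_mul_left _ _ (ne_of_gt hApos),
      mul_comm t ‖x‖, mul_comm (1 - t) ‖x‖,
      mul_div_mul_left _ _ (ne_of_gt hxpos)]
  rw [heq] at key
  exact key
end

section
/- Let L, ΔL ∈ ℝ^{n×n} with L invertible and |ΔL| ≤ ε|L| entrywise for some ε ≥ 0, let A ∈ ℝ^{n×n}, and let z ∈ ℝⁿ. Then ‖L⁻¹ ΔL L⁻¹ A z‖ ≤ ε · ‖ |L⁻¹| |L| ‖ · ‖L⁻¹A‖ · ‖z‖, and in particular ‖L⁻¹ ΔL L⁻¹ A z‖ ≤ ε √n · κ(L) · ‖L⁻¹A‖ · ‖z‖ with κ(L) = ‖L‖‖L⁻¹‖. -/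
open Matrix
open scoped Matrix.Norms.L2Operator

private lemma my_l2_opNorm_le_bound {m k : Type*} [Fintype m] [Fintype k] [DecidableEq m] [DecidableEq k]
    (A : Matrix m k ℝ) {c : ℝ} (hc : 0 ≤ c)
    (h : ∀ x : EuclideanSpace ℝ k,
      ‖(EuclideanSpace.equiv m ℝ).symm (A *ᵥ x)‖ ≤ c * ‖x‖) : ‖A‖ ≤ c := by
  rw [Matrix.l2_opNorm_def]
  exact ContinuousLinearMap.opNorm_le_bound _ hc fun x => h x

private lemma my_l2_opNorm_le_of_abs_le {m k : Type*} [Fintype m] [Fintype k] [DecidableEq m] [DecidableEq k]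
    {B C : Matrix m k ℝ} (h : ∀ i j, |B i j| ≤ C i j) : ‖B‖ ≤ ‖C‖ := by
  refine my_l2_opNorm_le_bound B (norm_nonneg C) fun x => ?_
  set y : EuclideanSpace ℝ k := WithLp.toLp 2 (fun j => |x j|) with hy
  have hyx : ‖y‖ = ‖x‖ := by
    simp [EuclideanSpace.norm_eq, hy, Real.norm_eq_abs, abs_abs]
  have h1 : ‖(EuclideanSpace.equiv m ℝ).symm (B *ᵥ x)‖
      ≤ ‖(EuclideanSpace.equiv m ℝ).symm (C *ᵥ y)‖ := by
    simp only [EuclideanSpace.norm_eq]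
    apply Real.sqrt_le_sqrt
    apply Finset.sum_le_sum
    intro i _
    have hb : |(B *ᵥ x) i| ≤ (C *ᵥ y) i := by
      refine (Finset.abs_sum_le_sum_abs _ _).trans ?_
      apply Finset.sum_le_sum
      intro j _
      rw [abs_mul]
      exact mul_le_mul (h i j) le_rfl (abs_nonneg _)
        ((abs_nonneg _).trans (h i j))
    have : ((EuclideanSpace.equiv m ℝ).symm (B *ᵥ x)) i = (B *ᵥ x) i := rfl
    rw [this]
    have : ((EuclideanSpace.equiv m ℝ).symm (C *ᵥ y)) i = (C *ᵥ y) i := rfl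
    rw [this]
    simp only [Real.norm_eq_abs]
    rw [abs_of_nonneg (le_trans (abs_nonneg _) hb)]
    exact pow_le_pow_left₀ (abs_nonneg _) hb 2
  calc ‖(EuclideanSpace.equiv m ℝ).symm (B *ᵥ x)‖
      ≤ ‖(EuclideanSpace.equiv m ℝ).symm (C *ᵥ y)‖ := h1
    _ ≤ ‖C‖ * ‖y‖ := Matrix.l2_opNorm_mulVec C y
    _ = ‖C‖ * ‖x‖ := by rw [hyx]

private lemma my_l2_opNorm_le_frobenius {m k : Type*} [Fintype m] [Fintype k] [DecidableEq m] [DecidableEq k]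
    (M : Matrix m k ℝ) :
    ‖M‖ ≤ Real.sqrt (∑ i, ∑ j, (M i j) ^ 2) := by
  refine my_l2_opNorm_le_bound M (Real.sqrt_nonneg _) fun x => ?_
  have hx : ‖x‖ = Real.sqrt (∑ j, (x j) ^ 2) := by
    simp [EuclideanSpace.norm_eq, Real.norm_eq_abs, sq_abs]
  rw [EuclideanSpace.norm_eq, hx, ← Real.sqrt_mul (by positivity)]
  apply Real.sqrt_le_sqrt
  rw [Finset.sum_mul]
  apply Finset.sum_le_sum
  intro i _
  have : ‖((EuclideanSpace.equiv m ℝ).symm (M *ᵥ x)) i‖ ^ 2 = ((M *ᵥ x) i) ^ 2 := by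
    simp [Real.norm_eq_abs, sq_abs]
  rw [this]
  have := Finset.sum_mul_sq_le_sq_mul_sq Finset.univ (fun j => M i j) (fun j => x j)
  simpa [Matrix.mulVec, dotProduct] using this

private lemma my_frobenius_le {n : ℕ} (L : Matrix (Fin n) (Fin n) ℝ) :
    (∑ i, ∑ j, (L i j) ^ 2) ≤ (n : ℝ) * ‖L‖ ^ 2 := by
  rw [Finset.sum_comm]
  have hcol : ∀ j, (∑ i, (L i j) ^ 2) ≤ ‖L‖ ^ 2 := by
    intro j
    have hmv := Matrix.l2_opNorm_mulVec L (EuclideanSpace.single j (1 : ℝ))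
    rw [EuclideanSpace.norm_single] at hmv
    simp only [norm_one, mul_one] at hmv
    have hval : (EuclideanSpace.equiv (Fin n) ℝ).symm
        (L *ᵥ (EuclideanSpace.single j (1 : ℝ))) = fun i => L i j := by
      funext i
      show (L *ᵥ (EuclideanSpace.single j (1 : ℝ))) i = L i j
      have : (EuclideanSpace.single j (1 : ℝ) : Fin n → ℝ) = Pi.single j 1 := rfl
      rw [this, Matrix.mulVec_single]; simp
    have hnorm : ‖(EuclideanSpace.equiv (Fin n) ℝ).symm
        (L *ᵥ (EuclideanSpace.single j (1 : ℝ)))‖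
        = Real.sqrt (∑ i, (L i j) ^ 2) := by
      rw [EuclideanSpace.norm_eq]
      congr 1
      apply Finset.sum_congr rfl
      intro i _
      rw [show ((EuclideanSpace.equiv (Fin n) ℝ).symm
        (L *ᵥ (EuclideanSpace.single j (1 : ℝ)))) i = L i j from congrFun hval i]
      simp [Real.norm_eq_abs, sq_abs]
    rw [hnorm] at hmv
    calc (∑ i, (L i j) ^ 2) = Real.sqrt (∑ i, (L i j) ^ 2) ^ 2 := by
          rw [Real.sq_sqrt (by positivity)]
      _ ≤ ‖L‖ ^ 2 := by
          apply pow_le_pow_left₀ (Real.sqrt_nonneg _) hmv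
  calc (∑ j, ∑ i, (L i j) ^ 2) ≤ ∑ _j : Fin n, ‖L‖ ^ 2 :=
        Finset.sum_le_sum fun j _ => hcol j
    _ = (n : ℝ) * ‖L‖ ^ 2 := by simp [mul_comm]

/-- Bound (3.4) underlying the estimate ψ_L ≤ c̃(n)κ(L̄) for the LU split preconditioner. -/
theorem psiL_bound_LU_split
    (n : ℕ)
    (L ΔL : Matrix (Fin n) (Fin n) ℝ) (hL : IsUnit L.det)
    (ε : ℝ) (hε : 0 ≤ ε)
    (habs : ∀ i j, |ΔL i j| ≤ ε * |L i j|)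
    (A : Matrix (Fin n) (Fin n) ℝ)
    (z : Matrix (Fin n) (Fin 1) ℝ) :
    ‖L⁻¹ * ΔL * L⁻¹ * A * z‖ ≤
        ε * ‖(Matrix.of fun i j => |L⁻¹ i j|) * (Matrix.of fun i j => |L i j|)‖ *
          ‖L⁻¹ * A‖ * ‖z‖ ∧
      ‖L⁻¹ * ΔL * L⁻¹ * A * z‖ ≤
        ε * Real.sqrt n * (‖L‖ * ‖L⁻¹‖) * ‖L⁻¹ * A‖ * ‖z‖ := by
  have hsplit : L⁻¹ * ΔL * L⁻¹ * A * z = (L⁻¹ * ΔL) * ((L⁻¹ * A) * z) := by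
    simp only [Matrix.mul_assoc]
  have hmain : ‖L⁻¹ * ΔL * L⁻¹ * A * z‖ ≤ ‖L⁻¹ * ΔL‖ * (‖L⁻¹ * A‖ * ‖z‖) := by
    rw [hsplit]
    calc ‖(L⁻¹ * ΔL) * ((L⁻¹ * A) * z)‖ ≤ ‖L⁻¹ * ΔL‖ * ‖(L⁻¹ * A) * z‖ :=
          Matrix.l2_opNorm_mul _ _
      _ ≤ ‖L⁻¹ * ΔL‖ * (‖L⁻¹ * A‖ * ‖z‖) := by
          apply mul_le_mul_of_nonneg_left (Matrix.l2_opNorm_mul _ _) (norm_nonneg _)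
  constructor
  · -- first bound
    have hB : ‖L⁻¹ * ΔL‖ ≤
        ε * ‖(Matrix.of fun i j => |L⁻¹ i j|) * (Matrix.of fun i j => |L i j|)‖ := by
      have habs' : ∀ i j, |(L⁻¹ * ΔL) i j| ≤
          (ε • ((Matrix.of fun i j => |L⁻¹ i j|) * (Matrix.of fun i j => |L i j|))) i j := by
        intro i j
        simp only [Matrix.smul_apply, Matrix.mul_apply, smul_eq_mul, Matrix.of_apply]
        calc |∑ k, L⁻¹ i k * ΔL k j| ≤ ∑ k, |L⁻¹ i k * ΔL k j| :=
              Finset.abs_sum_le_sum_abs _ _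
          _ ≤ ∑ k, |L⁻¹ i k| * (ε * |L k j|) := by
              apply Finset.sum_le_sum
              intro k _
              rw [abs_mul]
              exact mul_le_mul_of_nonneg_left (habs k j) (abs_nonneg _)
          _ = ε * ∑ k, |L⁻¹ i k| * |L k j| := by
              rw [Finset.mul_sum]; apply Finset.sum_congr rfl; intros; ring
      calc ‖L⁻¹ * ΔL‖ ≤ ‖ε • ((Matrix.of fun i j => |L⁻¹ i j|) *
            (Matrix.of fun i j => |L i j|))‖ := my_l2_opNorm_le_of_abs_le habs'
        _ = ε * ‖(Matrix.of fun i j => |L⁻¹ i j|) * (Matrix.of fun i j => |L i j|)‖ := by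
            rw [norm_smul, Real.norm_eq_abs, abs_of_nonneg hε]
    calc ‖L⁻¹ * ΔL * L⁻¹ * A * z‖ ≤ ‖L⁻¹ * ΔL‖ * (‖L⁻¹ * A‖ * ‖z‖) := hmain
      _ ≤ (ε * ‖(Matrix.of fun i j => |L⁻¹ i j|) * (Matrix.of fun i j => |L i j|)‖) *
            (‖L⁻¹ * A‖ * ‖z‖) := by
          apply mul_le_mul_of_nonneg_right hB (by positivity)
      _ = ε * ‖(Matrix.of fun i j => |L⁻¹ i j|) * (Matrix.of fun i j => |L i j|)‖ *
            ‖L⁻¹ * A‖ * ‖z‖ := by ring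
  · -- second bound
    have hΔL : ‖ΔL‖ ≤ ε * Real.sqrt n * ‖L‖ := by
      calc ‖ΔL‖ ≤ Real.sqrt (∑ i, ∑ j, (ΔL i j) ^ 2) := my_l2_opNorm_le_frobenius ΔL
        _ ≤ Real.sqrt (ε ^ 2 * ∑ i, ∑ j, (L i j) ^ 2) := by
            apply Real.sqrt_le_sqrt
            rw [Finset.mul_sum]
            apply Finset.sum_le_sum; intro i _
            rw [Finset.mul_sum]
            apply Finset.sum_le_sum; intro j _
            calc (ΔL i j) ^ 2 = |ΔL i j| ^ 2 := (sq_abs _).symm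
              _ ≤ (ε * |L i j|) ^ 2 := pow_le_pow_left₀ (abs_nonneg _) (habs i j) 2
              _ = ε ^ 2 * (L i j) ^ 2 := by rw [mul_pow, sq_abs]
        _ ≤ Real.sqrt (ε ^ 2 * ((n : ℝ) * ‖L‖ ^ 2)) := by
            apply Real.sqrt_le_sqrt
            exact mul_le_mul_of_nonneg_left (my_frobenius_le L) (by positivity)
        _ = ε * Real.sqrt n * ‖L‖ := by
            rw [Real.sqrt_mul (by positivity), Real.sqrt_mul (by positivity),
              Real.sqrt_sq hε, Real.sqrt_sq (norm_nonneg _)]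
            ring
    have hB : ‖L⁻¹ * ΔL‖ ≤ ‖L⁻¹‖ * (ε * Real.sqrt n * ‖L‖) :=
      (Matrix.l2_opNorm_mul _ _).trans
        (mul_le_mul_of_nonneg_left hΔL (norm_nonneg _))
    calc ‖L⁻¹ * ΔL * L⁻¹ * A * z‖ ≤ ‖L⁻¹ * ΔL‖ * (‖L⁻¹ * A‖ * ‖z‖) := hmain
      _ ≤ (‖L⁻¹‖ * (ε * Real.sqrt n * ‖L‖)) * (‖L⁻¹ * A‖ * ‖z‖) := by
          apply mul_le_mul_of_nonneg_right hB (by positivity)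
      _ = ε * Real.sqrt n * (‖L‖ * ‖L⁻¹‖) * ‖L⁻¹ * A‖ * ‖z‖ := by ring
end
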